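/- Let O be a commutative ring, A an associative unital O-algebra, P a group, and σ : P → A^× a group homomorphism into the group of units of A. Let H be a normal subgroup of P and D a subalgebra of A such that σ(h) ∈ D for all h ∈ H and σ(u)·D·σ(u)⁻¹ = D for all u ∈ P. Let T ⊆ P be a set of representatives of the cosets of H in P, and suppose that A is the internal direct sum, as an O-module, of the O-submodules D·σ(t) for t ∈ T. Let ζ : P → O^× be a group homomorphism with ζ(h) = 1 for all h ∈ H. Then there is a unique O-algebra automorphism α of A such that α(d·σ(u)) = ζ(u)·d·σ(u) for all d ∈ D and all u ∈ P; in particular, α fixes D elementwise and satisfies α(σ(u)) = ζ(u)·σ(u) for all u ∈ P. -/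

import Mathlib

/-!
STATEMENT 5.
Let `O` be a commutative ring, `A` an associative unital `O`-algebra, `P` a group and
`σ : P → Aˣ` a group homomorphism.  Let `H` be a normal subgroup of `P` and `D` a subalgebra
of `A` such that `σ(h) ∈ D` for all `h ∈ H` and `σ(u)·D·σ(u)⁻¹ = D` for all `u ∈ P`.
Let `T ⊆ P` be a set of representatives of the cosets of `H` in `P`, and suppose that `A`
is the internal direct sum, as an `O`-module, of the `O`-submodules `D·σ(t)`, `t ∈ T`.
Let `ζ : P → Oˣ` be a group homomorphism with `ζ(h) = 1` for all `h ∈ H`.  Then there is a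
unique `O`-algebra automorphism `α` of `A` with `α(d·σ(u)) = ζ(u)·d·σ(u)` for all `d ∈ D`,
`u ∈ P`; in particular `α` fixes `D` elementwise and `α(σ(u)) = ζ(u)·σ(u)` for all `u ∈ P`.
-/
theorem stmt5 (O A : Type*) [CommRing O] [Ring A] [Algebra O A]
    (P : Type*) [Group P] [DecidableEq P] (σ : P →* Aˣ)
    (H : Subgroup P) [H.Normal] (D : Subalgebra O A)
    (hHD : ∀ h ∈ H, ((σ h : Aˣ) : A) ∈ D)
    (hstab : ∀ u : P,
      (fun d : A => ((σ u : Aˣ) : A) * d * (((σ u)⁻¹ : Aˣ) : A)) '' (D : Set A) = (D : Set A))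
    (T : Set P) (hT : ∀ u : P, ∃! t : P, t ∈ T ∧ u⁻¹ * t ∈ H)
    (hdirect : DirectSum.IsInternal fun t : T =>
      (Subalgebra.toSubmodule D).map (LinearMap.mulRight O (((σ (t : P)) : Aˣ) : A)))
    (ζ : P →* Oˣ) (hζ : ∀ h ∈ H, ζ h = 1) :
    (∃! α : A ≃ₐ[O] A, ∀ d ∈ D, ∀ u : P,
        α (d * ((σ u : Aˣ) : A)) = (ζ u : O) • (d * ((σ u : Aˣ) : A)))
    ∧ ∀ α : A ≃ₐ[O] A,
        (∀ d ∈ D, ∀ u : P,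
          α (d * ((σ u : Aˣ) : A)) = (ζ u : O) • (d * ((σ u : Aˣ) : A))) →
        (∀ d ∈ D, α d = d) ∧ ∀ u : P, α ((σ u : Aˣ) : A) = (ζ u : O) • ((σ u : Aˣ) : A) := by
  classical
  set M : T → Submodule O A := fun t =>
    (Subalgebra.toSubmodule D).map (LinearMap.mulRight O (((σ (t : P)) : Aˣ) : A)) with hMdef
  -- conjugation stability
  have hconj : ∀ (u : P), ∀ x ∈ D,
      ((σ u : Aˣ) : A) * x * (((σ u)⁻¹ : Aˣ) : A) ∈ D := by
    intro u x hx
    have : ((σ u : Aˣ) : A) * x * (((σ u)⁻¹ : Aˣ) : A) ∈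
        (fun d : A => ((σ u : Aˣ) : A) * d * (((σ u)⁻¹ : Aˣ) : A)) '' (D : Set A) :=
      ⟨x, hx, rfl⟩
    rw [hstab u] at this
    exact this
  -- membership: d * σ u lies in M t for the representative t of uH, and ζ t = ζ u
  have hmem : ∀ (u : P), ∀ d ∈ D, ∃ t : T,
      d * ((σ u : Aˣ) : A) ∈ M t ∧ ζ (t : P) = ζ u := by
    intro u d hd
    obtain ⟨t, ⟨htT, hth⟩, -⟩ := hT u
    set h : P := u⁻¹ * t with hh
    have hu : u = t * h⁻¹ := by rw [hh, mul_inv_rev, inv_inv, ← mul_assoc, mul_inv_cancel, one_mul]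
    refine ⟨⟨t, htT⟩, ?_, ?_⟩
    · -- d * σ u = (d * (σ t * σ h⁻¹ * σ t ⁻¹)) * σ t
      have hc : ((σ t : Aˣ) : A) * ((σ (h⁻¹) : Aˣ) : A) * (((σ t)⁻¹ : Aˣ) : A) ∈ D :=
        hconj t _ (hHD _ (H.inv_mem hth))
      refine ⟨d * (((σ t : Aˣ) : A) * ((σ (h⁻¹) : Aˣ) : A) * (((σ t)⁻¹ : Aˣ) : A)),
        D.mul_mem hd hc, ?_⟩
      show _ * ((σ t : Aˣ) : A) = _
      have h1 : (((σ t)⁻¹ : Aˣ) : A) * ((σ t : Aˣ) : A) = 1 := by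
        rw [← Units.val_mul, inv_mul_cancel, Units.val_one]
      have h2 : ((σ u : Aˣ) : A) = ((σ t : Aˣ) : A) * ((σ (h⁻¹) : Aˣ) : A) := by
        rw [hu, map_mul, Units.val_mul]
      rw [h2]
      simp only [mul_assoc, h1, mul_one]
    · have : ζ t = ζ u * ζ h := by rw [← map_mul]; congr 1; rw [hh, ← mul_assoc, mul_inv_cancel, one_mul]
      rw [this, hζ h hth, mul_one]
  -- the linear equivalence
  let e : (DirectSum T fun t : T => M t) ≃ₗ[O] A := LinearEquiv.ofBijective (DirectSum.coeLinearMap M) hdirect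
  let g : (DirectSum T fun t : T => M t) ≃ₗ[O] (DirectSum T fun t : T => M t) :=
    DFinsupp.mapRange.linearEquiv fun t => LinearEquiv.smulOfUnit (ζ (t : P))
  let αlin : A ≃ₗ[O] A := (e.symm.trans g).trans e
  have key : ∀ (t : T), ∀ x ∈ M t, αlin x = ((ζ (t : P) : Oˣ) : O) • x := by
    intro t x hx
    have he : e (DirectSum.of (fun t : T => M t) t ⟨x, hx⟩) = x :=
      DirectSum.coeLinearMap_of M t ⟨x, hx⟩
    have hsymm : e.symm x = DirectSum.of (fun t : T => M t) t ⟨x, hx⟩ := by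
      rw [LinearEquiv.symm_apply_eq, he]
    have hg : g (DirectSum.of (fun t : T => M t) t ⟨x, hx⟩) =
        DirectSum.of (fun t : T => M t) t (((ζ (t : P) : Oˣ) : O) • ⟨x, hx⟩) := by
      exact DFinsupp.mapRange_single (hf := fun i => map_zero _)
    show e (g (e.symm x)) = _
    rw [hsymm, hg]
    exact DirectSum.coeLinearMap_of M t _
  have key2 : ∀ (u : P), ∀ d ∈ D,
      αlin (d * ((σ u : Aˣ) : A)) = ((ζ u : Oˣ) : O) • (d * ((σ u : Aˣ) : A)) := by
    intro u d hd
    obtain ⟨t, hxt, hζt⟩ := hmem u d hd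
    rw [key t _ hxt, hζt]
  have hsup : (⨆ t, M t) = ⊤ := hdirect.submodule_iSup_eq_top
  -- multiplicativity
  have hmul : ∀ x y : A, αlin (x * y) = αlin x * αlin y := by
    intro x y
    have hx : x ∈ ⨆ t, M t := by rw [hsup]; trivial
    refine Submodule.iSup_induction (motive := fun x : A => ∀ y : A,
      αlin (x * y) = αlin x * αlin y) M hx ?_ ?_ ?_ y
    · intro s x hxs y
      have hy : y ∈ ⨆ t, M t := by rw [hsup]; trivial
      refine Submodule.iSup_induction (motive := fun y : A =>
        αlin (x * y) = αlin x * αlin y) M hy ?_ ?_ ?_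
      · intro t y hyt
        obtain ⟨d, hd, rfl⟩ := hxs
        obtain ⟨c, hc, rfl⟩ := hyt
        simp only [LinearMap.mulRight_apply]
        have h1 : (((σ s)⁻¹ : Aˣ) : A) * ((σ (s : P) : Aˣ) : A) = 1 := by
          rw [← Units.val_mul, inv_mul_cancel, Units.val_one]
        have hprod : (d * ((σ (s : P) : Aˣ) : A)) * (c * ((σ (t : P) : Aˣ) : A)) =
            (d * (((σ (s : P) : Aˣ) : A) * c * (((σ s)⁻¹ : Aˣ) : A))) *
              ((σ ((s : P) * (t : P)) : Aˣ) : A) := by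
          rw [map_mul, Units.val_mul]
          simp only [mul_assoc]
          rw [← mul_assoc ((((σ s)⁻¹ : Aˣ)) : A), h1, one_mul]
        have hdc : d * (((σ (s : P) : Aˣ) : A) * c * (((σ s)⁻¹ : Aˣ) : A)) ∈ D :=
          D.mul_mem hd (hconj (s : P) c hc)
        rw [hprod, key2 _ _ hdc, key2 _ _ hd, key2 _ _ hc, ← hprod, map_mul,
          Units.val_mul, smul_mul_smul_comm]
      · simp
      · intro y1 y2 h1 h2
        rw [mul_add, map_add, h1, h2, map_add, mul_add]
    · intro y; simp
    · intro x1 x2 h1 h2 y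
      rw [add_mul, map_add, h1, h2, map_add, add_mul]
  -- unit
  have hone : αlin 1 = 1 := by
    obtain ⟨t0, ⟨ht0T, ht0H⟩, -⟩ := hT 1
    rw [inv_one, one_mul] at ht0H
    have h1' : ((σ (t0⁻¹) : Aˣ) : A) * ((σ t0 : Aˣ) : A) = 1 := by
      rw [← Units.val_mul, ← map_mul, inv_mul_cancel, map_one, Units.val_one]
    have := key2 t0 _ (hHD _ (H.inv_mem ht0H))
    rw [h1', hζ t0 ht0H] at this
    simpa using this
  let α : A ≃ₐ[O] A := AlgEquiv.ofLinearEquiv αlin hone hmul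
  have hαapp : ∀ x : A, α x = αlin x := fun _ => rfl
  have hαprop : ∀ d ∈ D, ∀ u : P,
      α (d * ((σ u : Aˣ) : A)) = ((ζ u : Oˣ) : O) • (d * ((σ u : Aˣ) : A)) := by
    intro d hd u; rw [hαapp]; exact key2 u d hd
  have huniq : ∀ α' : A ≃ₐ[O] A, (∀ d ∈ D, ∀ u : P,
      α' (d * ((σ u : Aˣ) : A)) = ((ζ u : Oˣ) : O) • (d * ((σ u : Aˣ) : A))) → α' = α := by
    intro α' hα'
    apply AlgEquiv.ext
    intro x
    have hx : x ∈ ⨆ t, M t := by rw [hsup]; trivial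
    refine Submodule.iSup_induction (motive := fun x : A => α' x = α x) M hx ?_ ?_ ?_
    · intro t x hxt
      obtain ⟨d, hd, rfl⟩ := hxt
      simp only [LinearMap.mulRight_apply]
      rw [hα' d hd (t : P), hαprop d hd (t : P)]
    · simp
    · intro x1 x2 h1 h2; rw [map_add, map_add, h1, h2]
  constructor
  · exact ⟨α, hαprop, huniq⟩
  · intro β hβ
    constructor
    · intro d hd
      have := hβ d hd 1
      simpa using this
    · intro u
      have := hβ 1 D.one_mem u
      simpa using this
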